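/- Let R be a commutative ring whose additive group is ℤ-torsion-free, and let Φ be a right exact functor from nilpotent R-algebras to abelian groups which is exact on nilpotent R-algebras whose underlying additive groups are ℚ-vector spaces and exact on nilpotent R-algebras with vanishing square. Then for every injective morphism N' → N of nilpotent R-algebras such that the additive group of N' is ℤ-torsion-free, the induced homomorphism Φ(N') → Φ(N) is injective. -/

import Mathlib

universe u v

/-- Product of `n+1` elements of a (possibly non-unital) multiplicative structure. -/
def nprod {N : Type u} [Mul N] : (n : ℕ) → (Fin (n + 1) → N) → N
  | 0, f => f 0
  | n + 1, f => f 0 * nprod n fun i => f i.succ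

/-- A bundled nilpotent `R`-algebra: a non-unital commutative `R`-algebra `N`
such that every product of `k` elements vanishes, for some `k ≥ 1`. -/
structure NilpAlg (R : Type u) [CommRing R] : Type (u + 1) where
  carrier : Type u
  [nonUnitalCommRing : NonUnitalCommRing carrier]
  [module : Module R carrier]
  [isScalarTower : IsScalarTower R carrier carrier]
  [smulCommClass : SMulCommClass R carrier carrier]
  nilpotent : ∃ k : ℕ, ∀ f : Fin (k + 1) → carrier, nprod k f = 0

attribute [instance] NilpAlg.nonUnitalCommRing NilpAlg.module NilpAlg.isScalarTower
  NilpAlg.smulCommClass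

variable {R : Type u} [CommRing R]

/-- `0 → N₁ → N₂ → N₃ → 0` is a short exact sequence of nilpotent `R`-algebras
(exactness being measured on underlying modules/additive groups). -/
def IsSES {N₁ N₂ N₃ : NilpAlg R} (i : N₁.carrier →ₙₐ[R] N₂.carrier)
    (p : N₂.carrier →ₙₐ[R] N₃.carrier) : Prop :=
  Function.Injective i ∧ Function.Surjective p ∧ ∀ x : N₂.carrier, p x = 0 ↔ x ∈ Set.range i

/-- A functor from nilpotent `R`-algebras to abelian groups. -/
structure AbFunctor (R : Type u) [CommRing R] : Type (max (u + 1) (v + 1)) where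
  obj : NilpAlg R → Type v
  [addCommGroup : ∀ N, AddCommGroup (obj N)]
  map : ∀ {N₁ N₂ : NilpAlg R}, (N₁.carrier →ₙₐ[R] N₂.carrier) → (obj N₁ →+ obj N₂)
  map_id : ∀ N : NilpAlg R, map (NonUnitalAlgHom.id R N.carrier) = AddMonoidHom.id (obj N)
  map_comp : ∀ {N₁ N₂ N₃ : NilpAlg R} (f : N₁.carrier →ₙₐ[R] N₂.carrier)
    (g : N₂.carrier →ₙₐ[R] N₃.carrier), map (g.comp f) = (map g).comp (map f)

attribute [instance] AbFunctor.addCommGroup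

/-- `Φ` is right exact: every short exact sequence `0 → N₁ → N₂ → N₃ → 0` yields an
exact sequence `Φ(N₁) → Φ(N₂) → Φ(N₃) → 0` of abelian groups. -/
def AbFunctor.RightExact (Φ : AbFunctor.{u, v} R) : Prop :=
  ∀ {N₁ N₂ N₃ : NilpAlg R} (i : N₁.carrier →ₙₐ[R] N₂.carrier)
    (p : N₂.carrier →ₙₐ[R] N₃.carrier), IsSES i p →
      Function.Surjective (Φ.map p) ∧
      ∀ y : Φ.obj N₂, Φ.map p y = 0 ↔ y ∈ Set.range (Φ.map i)

/-- `Φ` is exact on short exact sequences all of whose terms satisfy `P`: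
the induced sequence `0 → Φ(N₁) → Φ(N₂) → Φ(N₃) → 0` is exact. -/
def AbFunctor.ExactOn (Φ : AbFunctor.{u, v} R) (P : NilpAlg R → Prop) : Prop :=
  ∀ {N₁ N₂ N₃ : NilpAlg R}, P N₁ → P N₂ → P N₃ →
    ∀ (i : N₁.carrier →ₙₐ[R] N₂.carrier) (p : N₂.carrier →ₙₐ[R] N₃.carrier), IsSES i p →
      Function.Injective (Φ.map i) ∧ Function.Surjective (Φ.map p) ∧
      ∀ y : Φ.obj N₂, Φ.map p y = 0 ↔ y ∈ Set.range (Φ.map i)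

/-- The additive group underlying `N` is (the additive group of) a `ℚ`-vector space,
i.e. it is uniquely divisible. -/
def IsQVectorSpace (N : Type v) [AddCommGroup N] : Prop :=
  ∀ n : ℤ, n ≠ 0 → Function.Bijective fun x : N => n • x


set_option linter.unusedSectionVars false

section AuxProof

theorem nprod_cons {M : Type*} [Mul M] (k : ℕ) (x : M) (g : Fin (k+1) → M) :
    nprod (k+1) (Fin.cons x g) = x * nprod k g := by
  simp only [nprod, Fin.cons_zero, Fin.cons_succ]

theorem nprod_map {A B : Type*} [Mul A] [Mul B] (φ : A → B)
    (hφ : ∀ x y, φ (x*y) = φ x * φ y) :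
    ∀ (k : ℕ) (f : Fin (k+1) → A), φ (nprod k f) = nprod k (φ ∘ f)
  | 0, _ => rfl
  | (k+1), f => by
      show φ (f 0 * nprod k fun i => f i.succ) = φ (f 0) * nprod k fun i => φ (f i.succ)
      rw [hφ, nprod_map φ hφ k]; rfl

variable {R : Type u} [CommRing R]

/-- Helper to build non-unital algebra homs. -/
def mkNAH {A B : Type u} [NonUnitalCommRing A] [NonUnitalCommRing B]
    [Module R A] [Module R B] (f : A → B)
    (hadd : ∀ x y, f (x + y) = f x + f y)
    (hsmul : ∀ (r : R) (x), f (r • x) = r • f x)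
    (hmul : ∀ x y, f (x * y) = f x * f y)
    (hzero : f 0 = 0) : A →ₙₐ[R] B :=
  { toFun := f, map_add' := hadd, map_smul' := hsmul, map_mul' := hmul, map_zero' := hzero }

@[simp] theorem mkNAH_apply {A B : Type u} [NonUnitalCommRing A] [NonUnitalCommRing B]
    [Module R A] [Module R B] (f : A → B) (h1 h2 h3 h4) (x : A) :
    mkNAH (R := R) f h1 h2 h3 h4 x = f x := rfl

/-- The linear map underlying a non-unital algebra hom. -/
def nahLin {A B : Type u} [NonUnitalCommRing A] [NonUnitalCommRing B]
    [Module R A] [Module R B] (j : A →ₙₐ[R] B) : A →ₗ[R] B :=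
  { toFun := j, map_add' := map_add j, map_smul' := map_smul j }

@[simp] theorem nahLin_apply {A B : Type u} [NonUnitalCommRing A] [NonUnitalCommRing B]
    [Module R A] [Module R B] (j : A →ₙₐ[R] B) (x : A) : nahLin j x = j x := rfl

/-- Subalgebra of a nilpotent algebra on a multiplication-closed submodule. -/
def NilpAlg.sub (N : NilpAlg R) (S : Submodule R N.carrier)
    (h : ∀ x y, x ∈ S → y ∈ S → x * y ∈ S) : NilpAlg R :=
  letI : Mul ↥S := ⟨fun a b => ⟨a.1 * b.1, h _ _ a.2 b.2⟩⟩
  letI : NonUnitalCommRing ↥S :=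
    Function.Injective.nonUnitalCommRing (Subtype.val) Subtype.val_injective
      rfl (fun _ _ => rfl) (fun _ _ => rfl) (fun _ => rfl) (fun _ _ => rfl)
      (fun _ _ => rfl) (fun _ _ => rfl)
  { carrier := ↥S
    module := inferInstance
    isScalarTower := ⟨fun r a b => Subtype.ext (smul_mul_assoc r a.1 b.1)⟩
    smulCommClass := ⟨fun r a b => Subtype.ext ((mul_smul_comm r a.1 b.1).symm)⟩
    nilpotent := by
      obtain ⟨k, hk⟩ := N.nilpotent
      refine ⟨k, fun f => Subtype.val_injective ?_⟩
      rw [nprod_map (Subtype.val : ↥S → N.carrier) (fun _ _ => rfl) k f]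
      exact hk _ }

def NilpAlg.subIncl (N : NilpAlg R) (S : Submodule R N.carrier)
    (h : ∀ x y, x ∈ S → y ∈ S → x * y ∈ S) :
    (N.sub S h).carrier →ₙₐ[R] N.carrier :=
  mkNAH Subtype.val (fun _ _ => rfl) (fun _ _ => rfl) (fun _ _ => rfl) rfl

section Q
variable {M : Type u} [NonUnitalCommRing M] [Module R M]
  [IsScalarTower R M M] [SMulCommClass R M M] (S : Submodule R M)
  (hS : ∀ x s, s ∈ S → x * s ∈ S)

def qmul : Mul (M ⧸ S) :=
  ⟨fun x y => Quotient.liftOn₂ x y (fun a b => Submodule.Quotient.mk (a * b))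
    (by
      intro a b c d hac hbd
      replace hac : a - c ∈ S := (Submodule.quotientRel_def S).mp hac
      replace hbd : b - d ∈ S := (Submodule.quotientRel_def S).mp hbd
      show Submodule.Quotient.mk _ = Submodule.Quotient.mk _
      rw [Submodule.Quotient.eq]
      have h2 : a * b - c * d = (a - c) * b + c * (b - d) := by
        rw [sub_mul, mul_sub, sub_add_sub_cancel]
      rw [h2]
      exact S.add_mem (mul_comm (a-c) b ▸ hS b _ hac) (hS c _ hbd))⟩

theorem qmul_mk (a b : M) :
    (qmul S hS).mul (Submodule.Quotient.mk a) (Submodule.Quotient.mk b)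
      = Submodule.Quotient.mk (a * b) := rfl

def qring : NonUnitalCommRing (M ⧸ S) :=
  letI : Mul (M ⧸ S) := qmul S hS
  Function.Surjective.nonUnitalCommRing (Submodule.Quotient.mk (p := S))
    (Submodule.Quotient.mk_surjective S) rfl (fun _ _ => rfl)
    (fun a b => (qmul_mk S hS a b).symm)
    (fun _ => rfl) (fun _ _ => rfl)
    (fun n x => (S.mkQ.toAddMonoidHom.map_nsmul n x))
    (fun n x => (S.mkQ.toAddMonoidHom.map_zsmul n x))

end Q

def NilpAlg.quot (N : NilpAlg R) (S : Submodule R N.carrier)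
    (hS : ∀ x s, s ∈ S → x * s ∈ S) : NilpAlg R :=
  letI : Mul (N.carrier ⧸ S) := qmul S hS
  letI : NonUnitalCommRing (N.carrier ⧸ S) := qring S hS
  { carrier := N.carrier ⧸ S
    module := Submodule.Quotient.module S
    isScalarTower := ⟨fun r x y => by
      obtain ⟨a, rfl⟩ := Submodule.Quotient.mk_surjective S x
      obtain ⟨b, rfl⟩ := Submodule.Quotient.mk_surjective S y
      show Submodule.Quotient.mk ((r • a) * b) = Submodule.Quotient.mk (r • (a * b))
      exact congrArg _ (smul_mul_assoc r a b)⟩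
    smulCommClass := ⟨fun r x y => by
      obtain ⟨a, rfl⟩ := Submodule.Quotient.mk_surjective S x
      obtain ⟨b, rfl⟩ := Submodule.Quotient.mk_surjective S y
      show Submodule.Quotient.mk (r • (a * b)) = Submodule.Quotient.mk (a * (r • b))
      exact congrArg _ (mul_smul_comm r a b).symm⟩
    nilpotent := by
      obtain ⟨k, hk⟩ := N.nilpotent
      refine ⟨k, fun f => ?_⟩
      have hsur := Submodule.Quotient.mk_surjective S
      let g : Fin (k+1) → N.carrier := fun i => (hsur (f i)).choose
      have hg : ∀ i, Submodule.Quotient.mk (g i) = f i := fun i => (hsur (f i)).choose_spec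
      have hf : f = fun i => Submodule.Quotient.mk (g i) := funext fun i => (hg i).symm
      erw [hf, show (fun i => Submodule.Quotient.mk (g i))
          = (Submodule.Quotient.mk (p := S)) ∘ g from rfl,
        ← nprod_map (Submodule.Quotient.mk (p := S)) (fun a b => (qmul_mk S hS a b).symm) k g,
        hk g]
      rfl }

def NilpAlg.quotMk (N : NilpAlg R) (S : Submodule R N.carrier)
    (hS : ∀ x s, s ∈ S → x * s ∈ S) :
    N.carrier →ₙₐ[R] (N.quot S hS).carrier :=
  mkNAH (Submodule.Quotient.mk (p := S)) (fun _ _ => rfl)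
    (fun _ _ => rfl) (fun a b => (qmul_mk S hS a b).symm) rfl

end AuxProof


section AuxProof2
variable {R : Type u} [CommRing R]

theorem ses_sub_quot (N : NilpAlg R) (S : Submodule R N.carrier)
    (hS : ∀ x s, s ∈ S → x * s ∈ S) :
    IsSES (N.subIncl S (fun x y _ hy => hS x y hy)) (N.quotMk S hS) := by
  refine ⟨Subtype.val_injective, Submodule.Quotient.mk_surjective S, fun x => ?_⟩
  show Submodule.Quotient.mk x = 0 ↔ _
  rw [Submodule.Quotient.mk_eq_zero]
  constructor
  · exact fun h => ⟨⟨x, h⟩, rfl⟩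
  · rintro ⟨s, rfl⟩; exact s.2

section Homs
variable {N' W : NilpAlg R} (j : N'.carrier →ₙₐ[R] W.carrier)
  (A : Submodule R N'.carrier) (B : Submodule R W.carrier)
  (hA : ∀ x y, x ∈ A → y ∈ A → x * y ∈ A) (hB : ∀ x y, x ∈ B → y ∈ B → x * y ∈ B)
  (hAi : ∀ x s, s ∈ A → x * s ∈ A) (hBi : ∀ x s, s ∈ B → x * s ∈ B)
  (hAB : ∀ x, x ∈ A → j x ∈ B)

/-- Restriction of a hom to subalgebras. -/
def jres : (N'.sub A hA).carrier →ₙₐ[R] (W.sub B hB).carrier :=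
  mkNAH (fun x => ⟨j x.1, hAB _ x.2⟩)
    (fun x y => Subtype.ext (map_add j _ _))
    (fun r x => Subtype.ext (map_smul j r _))
    (fun x y => Subtype.ext (map_mul j _ _))
    (Subtype.ext (map_zero j))

/-- Hom induced on quotients. -/
def jbar : (N'.quot A hAi).carrier →ₙₐ[R] (W.quot B hBi).carrier :=
  mkNAH (Submodule.mapQ A B (nahLin j) (fun x hx => hAB x hx))
    (fun x y => map_add _ _ _)
    (fun r x => map_smul _ r x)
    (fun x y => by
      obtain ⟨a, rfl⟩ := Submodule.Quotient.mk_surjective A x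
      obtain ⟨b, rfl⟩ := Submodule.Quotient.mk_surjective A y
      show Submodule.mapQ A B (nahLin j) _ (Submodule.Quotient.mk (a * b)) = _
      show Submodule.Quotient.mk (j (a*b)) = Submodule.Quotient.mk (j a * j b)
      rw [map_mul])
    (map_zero _)

theorem comm_quot : (W.quotMk B hBi).comp j = (jbar j A B hAi hBi hAB).comp (N'.quotMk A hAi) := by
  apply NonUnitalAlgHom.ext
  intro x
  show Submodule.Quotient.mk (j x)
    = Submodule.mapQ A B (nahLin j) (fun x hx => hAB x hx) (Submodule.Quotient.mk x)
  rfl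

theorem comm_sub : j.comp (N'.subIncl A hA) = (W.subIncl B hB).comp (jres j A B hA hB hAB) :=
  NonUnitalAlgHom.ext fun _ => rfl

end Homs

theorem AbFunctor.map_comp_apply (Φ : AbFunctor.{u, v} R) {N₁ N₂ N₃ : NilpAlg R}
    (f : N₁.carrier →ₙₐ[R] N₂.carrier) (g : N₂.carrier →ₙₐ[R] N₃.carrier) (y : Φ.obj N₁) :
    Φ.map (g.comp f) y = Φ.map g (Φ.map f y) := by
  rw [Φ.map_comp]; rfl

end AuxProof2


section StarLemma
variable {R : Type u} [CommRing R]

theorem phiInjOfQVS (Φ : AbFunctor.{u, v} R) (hre : Φ.RightExact)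
    (hQ : Φ.ExactOn fun N => IsQVectorSpace N.carrier)
    (hsq : Φ.ExactOn fun N => ∀ x y : N.carrier, x * y = 0) :
    ∀ (k : ℕ) (W : NilpAlg R), (∀ f : Fin (k+1) → W.carrier, nprod k f = 0) →
      IsQVectorSpace W.carrier → ∀ (N' : NilpAlg R) (j : N'.carrier →ₙₐ[R] W.carrier),
      Function.Injective j → (∀ (n : ℤ) (x : N'.carrier), n ≠ 0 → n • x = 0 → x = 0) →
      Function.Injective (Φ.map j) := by
  intro k
  induction k with
  | zero =>
    intro W hWk hWQ N' j hj htf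
    have hW0 : ∀ w : W.carrier, w = 0 := fun w => hWk (fun _ => w)
    have hN0 : ∀ x : N'.carrier, x = 0 := fun x => hj (by rw [map_zero, hW0 (j x)])
    let z : W.carrier →ₙₐ[R] N'.carrier := 0
    have hcomp : z.comp j = NonUnitalAlgHom.id R N'.carrier := by
      apply NonUnitalAlgHom.ext
      intro x
      show (0 : N'.carrier) = x
      rw [hN0 x]
    intro a b hab
    have h2 := congrArg (Φ.map z) hab
    rw [← Φ.map_comp_apply, ← Φ.map_comp_apply, hcomp, Φ.map_id] at h2
    exact h2
  | succ k IH =>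
    intro W hWk hWQ N' j hj htf
    -- torsion-freeness of W
    have hWtf : ∀ (n : ℤ) (w : W.carrier), n ≠ 0 → n • w = 0 → w = 0 := by
      intro n w hn hw
      exact (hWQ n hn).1 (by simpa using hw)
    -- the annihilator ideal of W
    set B : Submodule R W.carrier :=
      { carrier := {w | ∀ v, v * w = 0}
        add_mem' := by intro a b ha hb v; rw [mul_add, ha v, hb v, add_zero]
        zero_mem' := fun v => mul_zero v
        smul_mem' := by intro r w hw v; rw [mul_smul_comm, hw v, smul_zero] } with hBdef
    have hBmem : ∀ w, w ∈ B ↔ ∀ v : W.carrier, v * w = 0 := fun w => Iff.rfl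
    have hBi : ∀ x s, s ∈ B → x * s ∈ B := by
      intro x s hs v
      rw [← mul_assoc]
      exact hs (v * x)
    have hBm : ∀ x y, x ∈ B → y ∈ B → x * y ∈ B := fun x y _ hy => hBi x y hy
    have hBsat : ∀ (n : ℤ) (w), n ≠ 0 → n • w ∈ B → w ∈ B := by
      intro n w hn h v
      exact hWtf n _ hn (by rw [← mul_smul_comm]; exact h v)
    -- its preimage in N'
    set A : Submodule R N'.carrier := Submodule.comap (nahLin j) B with hAdef
    have hAmem : ∀ x, x ∈ A ↔ j x ∈ B := fun x => Iff.rfl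
    have hAi : ∀ x s, s ∈ A → x * s ∈ A := by
      intro x s hs
      rw [hAmem, map_mul]
      exact hBi _ _ hs
    have hAm : ∀ x y, x ∈ A → y ∈ A → x * y ∈ A := fun x y _ hy => hAi x y hy
    have hAB : ∀ x, x ∈ A → j x ∈ B := fun x hx => hx
    -- the algebras
    set WB := W.sub B hBm with hWB
    set WQ := W.quot B hBi with hWQdef
    set NA := N'.sub A hAm with hNA
    set NQ := N'.quot A hAi with hNQ
    set iB := W.subIncl B hBm
    set pB := W.quotMk B hBi
    set iA := N'.subIncl A hAm
    set pA := N'.quotMk A hAi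
    set jA := jres j A B hAm hBm hAB
    set jq := jbar j A B hAi hBi hAB
    -- squares zero
    have hWBsq : ∀ x y : WB.carrier, x * y = 0 := by
      intro x y
      exact Subtype.ext (y.2 x.1)
    have hNAsq : ∀ x y : NA.carrier, x * y = 0 := by
      intro x y
      refine Subtype.ext (hj ?_)
      show j (x.1 * y.1) = j 0
      rw [map_mul, map_zero]
      exact (y.2 : j y.1 ∈ B) (j x.1)
    -- range of jA in WB
    set C : Submodule R WB.carrier := LinearMap.range (nahLin jA) with hC
    have hCi : ∀ x s, s ∈ C → x * s ∈ C := by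
      intro x s _
      rw [hWBsq x s]
      exact zero_mem _
    set WBC := WB.quot C hCi
    set pC := WB.quotMk C hCi
    have hWBCsq : ∀ x y : WBC.carrier, x * y = 0 := by
      intro x y
      obtain ⟨a, rfl⟩ := Submodule.Quotient.mk_surjective C x
      obtain ⟨b, rfl⟩ := Submodule.Quotient.mk_surjective C y
      show Submodule.Quotient.mk (a * b) = Submodule.Quotient.mk (0 : WB.carrier)
      rw [hWBsq a b]
    -- Q-vector space structures
    have hWBQ : IsQVectorSpace WB.carrier := by
      intro n hn
      constructor
      · intro a b hab
        exact Subtype.ext ((hWQ n hn).1 (congrArg Subtype.val hab))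
      · intro b
        obtain ⟨w, hw⟩ := (hWQ n hn).2 b.1
        have hw' : n • w = b.1 := hw
        have hwB : w ∈ B := hBsat n w hn (by rw [hw']; exact b.2)
        exact ⟨⟨w, hwB⟩, Subtype.ext hw'⟩
    have mkz : ∀ (S : Submodule R W.carrier) (n : ℤ) (a : W.carrier),
        (Submodule.Quotient.mk (n • a) : W.carrier ⧸ S) = n • Submodule.Quotient.mk a :=
      fun S n a => S.mkQ.toAddMonoidHom.map_zsmul n a
    have hWQQ : IsQVectorSpace WQ.carrier := by
      intro n hn
      constructor
      · intro x y hxy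
        obtain ⟨a, rfl⟩ := Submodule.Quotient.mk_surjective B x
        obtain ⟨b, rfl⟩ := Submodule.Quotient.mk_surjective B y
        have hxy' : (Submodule.Quotient.mk (n • a) : W.carrier ⧸ B)
            = Submodule.Quotient.mk (n • b) := by
          rw [mkz B n a, mkz B n b]; exact hxy
        rw [Submodule.Quotient.eq] at hxy'
        rw [← smul_sub] at hxy'
        exact Submodule.Quotient.eq B |>.mpr (hBsat n _ hn hxy')
      · intro x
        obtain ⟨a, rfl⟩ := Submodule.Quotient.mk_surjective B x
        obtain ⟨w, hw⟩ := (hWQ n hn).2 a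
        refine ⟨Submodule.Quotient.mk w, ?_⟩
        show n • (Submodule.Quotient.mk w : W.carrier ⧸ B) = Submodule.Quotient.mk a
        rw [← mkz B n w]
        exact congrArg _ hw
    -- torsion-freeness
    have hNAtf : ∀ (n : ℤ) (x : NA.carrier), n ≠ 0 → n • x = 0 → x = 0 := by
      intro n x hn hx
      exact Subtype.ext (htf n x.1 hn (congrArg Subtype.val hx))
    have mkzN : ∀ (S : Submodule R N'.carrier) (n : ℤ) (a : N'.carrier),
        (Submodule.Quotient.mk (n • a) : N'.carrier ⧸ S) = n • Submodule.Quotient.mk a :=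
      fun S n a => S.mkQ.toAddMonoidHom.map_zsmul n a
    have hNQtf : ∀ (n : ℤ) (x : NQ.carrier), n ≠ 0 → n • x = 0 → x = 0 := by
      intro n x hn hx
      obtain ⟨a, rfl⟩ := Submodule.Quotient.mk_surjective A x
      have hx' : (Submodule.Quotient.mk (n • a) : N'.carrier ⧸ A) = 0 := by
        rw [mkzN A n a]; exact hx
      rw [Submodule.Quotient.mk_eq_zero] at hx'
      have h5 : j (n • a) ∈ B := hx'
      rw [map_zsmul] at h5
      have h6 : j a ∈ B := hBsat n _ hn h5
      exact (Submodule.Quotient.mk_eq_zero A).mpr h6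
    -- nilpotency degree of WQ drops
    have hWQk : ∀ f : Fin (k+1) → WQ.carrier, nprod k f = 0 := by
      intro f
      have hsur := Submodule.Quotient.mk_surjective B
      let g : Fin (k+1) → W.carrier := fun i => (hsur (f i)).choose
      have hg : ∀ i, Submodule.Quotient.mk (g i) = f i := fun i => (hsur (f i)).choose_spec
      let mkW : W.carrier → WQ.carrier := Submodule.Quotient.mk (p := B)
      have hf : f = mkW ∘ g := funext fun i => (hg i).symm
      have hmk : ∀ a b : W.carrier, mkW (a * b) = mkW a * mkW b :=
        fun a b => (qmul_mk B hBi a b).symm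
      have hmem : nprod k g ∈ B := by
        intro v
        rw [← nprod_cons k v g]
        exact hWk _
      calc nprod k f = nprod k (mkW ∘ g) := by rw [hf]
        _ = mkW (nprod k g) := (nprod_map mkW hmk k g).symm
        _ = 0 := (Submodule.Quotient.mk_eq_zero B).mpr hmem
    -- injectivity of the induced maps
    have hjAinj : Function.Injective jA := by
      intro a b hab
      exact Subtype.ext (hj (congrArg Subtype.val hab))
    have hjqinj : Function.Injective jq := by
      rw [injective_iff_map_eq_zero]
      intro x hx
      obtain ⟨a, rfl⟩ := Submodule.Quotient.mk_surjective A x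
      have : (jq : NQ.carrier → WQ.carrier) (Submodule.Quotient.mk a)
          = Submodule.Quotient.mk (j a) := by
        show Submodule.mapQ A B (nahLin j) (fun x hx => hAB x hx) (Submodule.Quotient.mk a)
          = Submodule.Quotient.mk (j a)
        rfl
      rw [this] at hx
      exact (Submodule.Quotient.mk_eq_zero A).mpr ((Submodule.Quotient.mk_eq_zero B).mp hx)
    -- the short exact sequences
    have ses1 : IsSES iA pA := ses_sub_quot N' A hAi
    have ses2 : IsSES iB pB := ses_sub_quot W B hBi
    have ses3 : IsSES jA pC := by
      refine ⟨hjAinj, Submodule.Quotient.mk_surjective C, fun x => ?_⟩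
      show Submodule.Quotient.mk x = 0 ↔ _
      rw [Submodule.Quotient.mk_eq_zero]
      constructor
      · rintro ⟨y, rfl⟩; exact ⟨y, rfl⟩
      · rintro ⟨y, rfl⟩; exact ⟨y, rfl⟩
    -- Φ facts
    have h1 := hre iA pA ses1
    have h2 := hQ hWBQ hWQ hWQQ iB pB ses2
    have h3 := hsq hNAsq hWBsq hWBCsq jA pC ses3
    have h4 := IH WQ hWQk hWQQ NQ jq hjqinj hNQtf
    -- the diagram chase
    rw [injective_iff_map_eq_zero]
    intro y hy
    have e1 : Φ.map jq (Φ.map pA y) = Φ.map pB (Φ.map j y) := by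
      rw [← Φ.map_comp_apply, ← Φ.map_comp_apply, comm_quot j A B hAi hBi hAB]
    have e1' : Φ.map pA y = 0 := by
      apply (injective_iff_map_eq_zero (Φ.map jq)).mp h4
      rw [e1, hy, map_zero]
    obtain ⟨a, ha⟩ := (h1.2 y).mp e1'
    have e2 : Φ.map iB (Φ.map jA a) = Φ.map j (Φ.map iA a) := by
      rw [← Φ.map_comp_apply, ← Φ.map_comp_apply, comm_sub j A B hAm hBm hAB]
    rw [ha, hy] at e2
    have e3 : Φ.map jA a = 0 :=
      (injective_iff_map_eq_zero (Φ.map iB)).mp h2.1 _ e2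
    have e4 : a = 0 := (injective_iff_map_eq_zero (Φ.map jA)).mp h3.1 a e3
    rw [← ha, e4, map_zero]

end StarLemma


section RatAlg
variable {R : Type u} [CommRing R]

open scoped TensorProduct

/-- Tensoring a nilpotent algebra with `ℚ`. -/
noncomputable def NilpAlg.rat (N : NilpAlg R) : NilpAlg R :=
  letI mc : NonUnitalCommRing (N.carrier ⊗[ℤ] ℚ) :=
    { (inferInstance : NonUnitalRing (N.carrier ⊗[ℤ] ℚ)) with
      mul_comm := by
        intro x y
        induction x using TensorProduct.induction_on with
        | zero => exact (zero_mul y).trans (mul_zero y).symm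
        | tmul a q =>
          induction y using TensorProduct.induction_on with
          | zero => exact (mul_zero (a ⊗ₜ[ℤ] q)).trans (zero_mul (a ⊗ₜ[ℤ] q)).symm
          | tmul b p =>
            rw [Algebra.TensorProduct.tmul_mul_tmul, Algebra.TensorProduct.tmul_mul_tmul,
              mul_comm a b, mul_comm q p]
          | add u v hu hv =>
            exact (Distrib.left_distrib (a ⊗ₜ[ℤ] q) u v).trans
              ((congrArg₂ (· + ·) hu hv).trans (Distrib.right_distrib u v (a ⊗ₜ[ℤ] q)).symm)
        | add u v hu hv =>
          exact (Distrib.right_distrib u v y).trans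
            ((congrArg₂ (· + ·) hu hv).trans (Distrib.left_distrib y u v).symm) }
  { carrier := N.carrier ⊗[ℤ] ℚ
    nonUnitalCommRing := mc
    module := inferInstance
    isScalarTower := inferInstance
    smulCommClass := inferInstance
    nilpotent := by
      obtain ⟨k, hk⟩ := N.nilpotent
      refine ⟨k, fun f => ?_⟩
      have main : ∀ (m : ℕ) (f : Fin (m+1) → N.carrier ⊗[ℤ] ℚ),
          nprod m f ∈ Submodule.span ℤ
            {w : N.carrier ⊗[ℤ] ℚ | ∃ (g : Fin (m+1) → N.carrier) (q : ℚ),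
              w = (nprod m g) ⊗ₜ[ℤ] q} := by
        have pure_span : ∀ u : N.carrier ⊗[ℤ] ℚ, u ∈ Submodule.span ℤ
            {w : N.carrier ⊗[ℤ] ℚ | ∃ (x : N.carrier) (q : ℚ), w = x ⊗ₜ[ℤ] q} := by
          intro u
          induction u using TensorProduct.induction_on with
          | zero => exact zero_mem _
          | tmul x q => exact Submodule.subset_span ⟨x, q, rfl⟩
          | add u v hu hv => exact add_mem hu hv
        intro m
        induction m with
        | zero =>
          intro f
          show f 0 ∈ _
          refine Submodule.span_le.mpr ?_ (pure_span (f 0))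
          rintro w ⟨x, q, rfl⟩
          exact Submodule.subset_span ⟨fun _ => x, q, rfl⟩
        | succ m ih =>
          intro f
          show f 0 * nprod m (fun i => f i.succ) ∈ _
          have key : ∀ u ∈ Submodule.span ℤ
              {w : N.carrier ⊗[ℤ] ℚ | ∃ (x : N.carrier) (q : ℚ), w = x ⊗ₜ[ℤ] q},
              ∀ v ∈ Submodule.span ℤ
              {w : N.carrier ⊗[ℤ] ℚ | ∃ (g : Fin (m+1) → N.carrier) (q : ℚ),
                w = (nprod m g) ⊗ₜ[ℤ] q},
              u * v ∈ Submodule.span ℤ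
              {w : N.carrier ⊗[ℤ] ℚ | ∃ (g : Fin (m+1+1) → N.carrier) (q : ℚ),
                w = (nprod (m+1) g) ⊗ₜ[ℤ] q} := by
            intro u hu
            induction hu using Submodule.span_induction with
            | mem u hu =>
              obtain ⟨x, q, rfl⟩ := hu
              intro v hv
              induction hv using Submodule.span_induction with
              | mem w hw =>
                obtain ⟨g, p, rfl⟩ := hw
                rw [Algebra.TensorProduct.tmul_mul_tmul]
                refine Submodule.subset_span ⟨Fin.cons x g, q * p, ?_⟩
                rw [nprod_cons]
              | zero => rw [mul_zero]; exact zero_mem _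
              | add a b _ _ ha hb => rw [mul_add]; exact add_mem ha hb
              | smul n a _ ha => rw [mul_smul_comm]; exact Submodule.smul_mem _ n ha
            | zero => intro v hv; rw [zero_mul]; exact zero_mem _
            | add a b _ _ ha hb =>
              intro v hv
              rw [add_mul]
              exact add_mem (ha v hv) (hb v hv)
            | smul n a _ ha =>
              intro v hv
              rw [smul_mul_assoc]
              exact Submodule.smul_mem _ n (ha v hv)
          exact key _ (pure_span (f 0)) _ (ih (fun i => f i.succ))
      have h := main k f
      have hzero : {w : N.carrier ⊗[ℤ] ℚ | ∃ (g : Fin (k+1) → N.carrier) (q : ℚ),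
          w = (nprod k g) ⊗ₜ[ℤ] q} ⊆ {0} := by
        rintro w ⟨g, q, rfl⟩
        rw [hk g, TensorProduct.zero_tmul]
        rfl
      have : Submodule.span ℤ {w : N.carrier ⊗[ℤ] ℚ | ∃ (g : Fin (k+1) → N.carrier) (q : ℚ),
          w = (nprod k g) ⊗ₜ[ℤ] q} ≤ ⊥ := by
        rw [← Submodule.span_zero_singleton (R := ℤ) (M := N.carrier ⊗[ℤ] ℚ)]
        exact Submodule.span_mono hzero
      simpa using this h }

theorem rat_qvs (N : NilpAlg R) : IsQVectorSpace (N.rat).carrier := by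
  intro n hn
  have hn' : ((n : ℚ)) ≠ 0 := Int.cast_ne_zero.mpr hn
  let φ : N.carrier ⊗[ℤ] ℚ →ₗ[ℤ] N.carrier ⊗[ℤ] ℚ :=
    LinearMap.lTensor N.carrier ((n : ℚ)⁻¹ • (LinearMap.id : ℚ →ₗ[ℤ] ℚ))
  have hφ : ∀ w : N.carrier ⊗[ℤ] ℚ, n • φ w = w := by
    intro w
    induction w using TensorProduct.induction_on with
    | zero => rw [map_zero, smul_zero]
    | tmul x q =>
      rw [show φ (x ⊗ₜ[ℤ] q) = x ⊗ₜ[ℤ] ((n : ℚ)⁻¹ • (LinearMap.id : ℚ →ₗ[ℤ] ℚ)) q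
        from LinearMap.lTensor_tmul _ _ _ _]
      show n • (x ⊗ₜ[ℤ] ((n : ℚ)⁻¹ • q)) = x ⊗ₜ[ℤ] q
      rw [← TensorProduct.tmul_smul]
      congr 1
      show n • ((n : ℚ)⁻¹ * q) = q
      rw [zsmul_eq_mul, ← mul_assoc, mul_inv_cancel₀ hn', one_mul]
    | add u v hu hv => rw [map_add, smul_add, hu, hv]
  have hφ' : ∀ w : N.carrier ⊗[ℤ] ℚ, φ (n • w) = w := by
    intro w
    rw [map_zsmul]
    exact hφ w
  exact Function.bijective_iff_has_inverse.mpr ⟨φ, hφ', hφ⟩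

/-- The canonical map `N → N ⊗ ℚ`. -/
noncomputable def NilpAlg.ratIncl (N : NilpAlg R) : N.carrier →ₙₐ[R] (N.rat).carrier :=
  mkNAH (fun x => x ⊗ₜ[ℤ] (1 : ℚ))
    (fun x y => TensorProduct.add_tmul x y 1)
    (fun r x => rfl)
    (fun x y => by
      show (x * y) ⊗ₜ[ℤ] (1 : ℚ)
        = ((x ⊗ₜ[ℤ] (1 : ℚ)) * (y ⊗ₜ[ℤ] (1 : ℚ)) : N.carrier ⊗[ℤ] ℚ)
      rw [Algebra.TensorProduct.tmul_mul_tmul, one_mul])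
    (TensorProduct.zero_tmul _ 1)

theorem ratIncl_ker (N : NilpAlg R) (x : N.carrier) (h : N.ratIncl x = 0) :
    ∃ n : ℤ, n ≠ 0 ∧ n • x = 0 := by
  have h0 : x ⊗ₜ[ℤ] (1 : ℚ) = (0 : N.carrier ⊗[ℤ] ℚ) := h
  have h1 : (TensorProduct.mk ℤ ℚ N.carrier 1) x = 0 := by
    have := congrArg (TensorProduct.comm ℤ N.carrier ℚ) h0
    simpa using this
  haveI : IsLocalizedModule (nonZeroDivisors ℤ) (TensorProduct.mk ℤ ℚ N.carrier 1) :=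
    (isLocalizedModule_iff_isBaseChange (nonZeroDivisors ℤ) ℚ _).mpr
      (TensorProduct.isBaseChange ℤ N.carrier ℚ)
  obtain ⟨s, hs⟩ := (IsLocalizedModule.eq_zero_iff (nonZeroDivisors ℤ)
    (TensorProduct.mk ℤ ℚ N.carrier 1)).mp h1
  refine ⟨(s : ℤ), nonZeroDivisors.coe_ne_zero s, ?_⟩
  simpa [Submonoid.smul_def] using hs

end RatAlg


theorem stmt5 (R : Type u) [CommRing R]
    (hR : ∀ (n : ℤ) (r : R), n ≠ 0 → n • r = 0 → r = 0)
    (Φ : AbFunctor.{u, v} R) (hre : Φ.RightExact)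
    (hQ : Φ.ExactOn fun N => IsQVectorSpace N.carrier)
    (hsq : Φ.ExactOn fun N => ∀ x y : N.carrier, x * y = 0)
    (N' N : NilpAlg R) (f : N'.carrier →ₙₐ[R] N.carrier)
    (hf : Function.Injective f)
    (htf : ∀ (n : ℤ) (x : N'.carrier), n ≠ 0 → n • x = 0 → x = 0) :
    Function.Injective (Φ.map f) := by
  obtain ⟨k, hk⟩ := (N.rat).nilpotent
  set c := N.ratIncl with hc
  set j := c.comp f with hjdef
  have hjinj : Function.Injective j := by
    rw [injective_iff_map_eq_zero]
    intro x hx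
    have hx' : c (f x) = 0 := hx
    obtain ⟨n, hn, hnx⟩ := ratIncl_ker N (f x) hx'
    rw [← map_zsmul f] at hnx
    have : n • x = 0 := hf (by rw [hnx, map_zero])
    exact htf n x hn this
  have hstar := phiInjOfQVS Φ hre hQ hsq k (N.rat) hk (rat_qvs N) N' j hjinj htf
  intro a b hab
  apply hstar
  rw [hjdef, Φ.map_comp_apply, Φ.map_comp_apply, hab]
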